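/- A comonotonic, permutation-invariant coherent risk estimator ρ̂ : ℝⁿ → ℝ admits a representation ρ̂(x) = ⟨a, −s(x)⟩ for a unique probability vector a with nonincreasing coordinates a₁ ≥ … ≥ aₙ. -/

import Mathlib

open Finset

/-- `sortVec x` is the nondecreasing rearrangement of `x`. -/
noncomputable def sortVec {n : ℕ} (x : Fin n → ℝ) : Fin n → ℝ := x ∘ Tuple.sort x

lemma sortVec_of_monotone {n : ℕ} {x : Fin n → ℝ} (h : Monotone x) : sortVec x = x := by
  unfold sortVec
  rw [Tuple.sort_eq_refl_iff_monotone.2 h]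
  rfl

lemma sortVec_comp_perm {n : ℕ} (x : Fin n → ℝ) (σ : Equiv.Perm (Fin n)) :
    sortVec (x ∘ σ) = sortVec x := by
  unfold sortVec
  exact Tuple.comp_perm_comp_sort_eq_comp_sort

lemma monotone_sortVec {n : ℕ} (x : Fin n → ℝ) : Monotone (sortVec x) :=
  Tuple.monotone_sort x

lemma comono_of_monotone {n : ℕ} {x y : Fin n → ℝ} (hx : Monotone x) (hy : Monotone y) :
    ∀ i j : Fin n, 0 ≤ (x i - x j) * (y i - y j) := by
  intro i j
  rcases le_total i j with h | h
  · have h1 : 0 ≤ (x j - x i) * (y j - y i) :=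
      mul_nonneg (sub_nonneg.2 (hx h)) (sub_nonneg.2 (hy h))
    nlinarith [h1]
  · exact mul_nonneg (sub_nonneg.2 (hx h)) (sub_nonneg.2 (hy h))

lemma partial_sum_extract {n : ℕ} (c : Fin n → ℝ) (i : Fin n) :
    (∑ j : Fin n, if (j : ℕ) < (i : ℕ) + 1 then c j else 0)
      - (∑ j : Fin n, if (j : ℕ) < (i : ℕ) then c j else 0) = c i := by
  have h : ∀ j : Fin n, (if (j : ℕ) < (i : ℕ) + 1 then c j else 0)
      = (if (j : ℕ) < (i : ℕ) then c j else 0) + (if j = i then c j else 0) := by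
    intro j
    by_cases hji : j = i
    · subst hji; simp
    · have : (j : ℕ) ≠ (i : ℕ) := fun hh => hji (Fin.ext hh)
      by_cases hlt : (j : ℕ) < (i : ℕ)
      · simp [hlt, hji, Nat.lt_succ_of_lt hlt]
      · have : ¬ (j : ℕ) < (i : ℕ) + 1 := by omega
        simp [hlt, hji, this]
  simp only [h, Finset.sum_add_distrib]
  rw [Finset.sum_ite_eq' Finset.univ i c]
  simp

/-- A comonotonic, permutation-invariant coherent risk estimator admits a
representation `ρ̂(x) = ⟨a, -s(x)⟩` for a unique probability vector `a` with
nonincreasing coordinates. -/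
theorem comonotonic_CRE_representation {n : ℕ} (hn : 1 ≤ n)
    (ρ : (Fin n → ℝ) → ℝ)
    (hmono : ∀ x y : Fin n → ℝ, (∀ i, y i ≤ x i) → ρ x ≤ ρ y)
    (hcash : ∀ (x : Fin n → ℝ) (m : ℝ), ρ (fun i => x i + m) = ρ x - m)
    (hhom : ∀ (x : Fin n → ℝ) (l : ℝ), 0 ≤ l → ρ (fun i => l * x i) = l * ρ x)
    (hsub : ∀ x y : Fin n → ℝ, ρ (x + y) ≤ ρ x + ρ y)
    (hlaw : ∀ x : Fin n → ℝ, ρ x = ρ (sortVec x))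
    (hcom : ∀ x y : Fin n → ℝ, (∀ i j : Fin n, 0 ≤ (x i - x j) * (y i - y j)) →
      ρ (x + y) = ρ x + ρ y) :
    ∃! a : Fin n → ℝ,
      ((∀ i, 0 ≤ a i) ∧ (∑ i, a i = 1) ∧ (∀ i j : Fin n, i ≤ j → a j ≤ a i)) ∧
      ∀ x : Fin n → ℝ, ρ x = ∑ i, a i * (-(sortVec x i)) := by
  classical
  -- the step vectors
  set u : ℕ → Fin n → ℝ := fun m i => if m ≤ (i : ℕ) then 1 else 0 with hu_def
  set r : ℕ → ℝ := fun m => ρ (u m) with hr_def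
  set a : Fin n → ℝ := fun i => r ((i : ℕ) + 1) - r (i : ℕ) with ha_def
  have hu_mono : ∀ m, Monotone (u m) := by
    intro m i j hij
    have hij' : (i : ℕ) ≤ (j : ℕ) := hij
    simp only [hu_def]
    split_ifs <;> first | (exfalso; omega) | norm_num
  have hρ0 : ρ 0 = 0 := by
    have h := hhom 0 0 le_rfl
    simp only [zero_mul] at h
    exact h
  have hun : ∀ m, n ≤ m → u m = 0 := by
    intro m hm
    funext i
    have : ¬ m ≤ (i : ℕ) := by have := i.isLt; omega
    simp [hu_def, this]
  have hrn : ∀ m, n ≤ m → r m = 0 := by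
    intro m hm; simp [hr_def, hun m hm, hρ0]
  have hr0 : r 0 = -1 := by
    have h1 : u 0 = fun i => (0 : Fin n → ℝ) i + 1 := by
      funext i; simp [hu_def]
    have h := hcash 0 1
    simp only [hr_def, h1, h, hρ0]
    norm_num
  have hr_le : ∀ m, r m ≤ r (m + 1) := by
    intro m
    refine hmono (u m) (u (m + 1)) ?_
    intro i
    simp only [hu_def]
    split_ifs <;> first | (exfalso; omega) | norm_num
  have hr_nonpos : ∀ m, r m ≤ 0 := by
    intro m
    have h := hmono (u m) 0 (by
      intro i; simp only [hu_def, Pi.zero_apply]; split_ifs <;> norm_num)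
    simpa [hρ0] using h
  -- telescoping
  have hsum_range : ∀ m : ℕ, ∑ i ∈ Finset.range m, (r (i + 1) - r i) = r m - r 0 :=
    fun m => Finset.sum_range_sub r m
  have hsum_a : ∑ i, a i = 1 := by
    rw [ha_def, Fin.sum_univ_eq_sum_range (fun i => r (i + 1) - r i) n, hsum_range n,
      hrn n le_rfl, hr0]
    norm_num
  -- tail sums: ∑ a i * u k i = - r k for k ≤ n
  have htail : ∀ k : ℕ, k ≤ n → ∑ i, a i * u k i = -(r k) := by
    intro k hk
    have h1 : ∀ i : Fin n, a i * u k i = if k ≤ (i : ℕ) then r ((i : ℕ) + 1) - r (i : ℕ) else 0 := by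
      intro i
      simp only [ha_def, hu_def]
      split_ifs <;> ring
    rw [Finset.sum_congr rfl (fun i _ => h1 i)]
    rw [Fin.sum_univ_eq_sum_range (fun m => if k ≤ m then r (m + 1) - r m else 0) n]
    have h2 : ∑ m ∈ Finset.range n, (if k ≤ m then r (m + 1) - r m else 0)
        = ∑ m ∈ Finset.Ico k n, (r (m + 1) - r m) := by
      rw [Finset.range_eq_Ico, ← Finset.sum_Ico_consecutive _ (Nat.zero_le k) hk]
      have hz : ∑ m ∈ Finset.Ico 0 k, (if k ≤ m then r (m + 1) - r m else 0) = 0 := by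
        apply Finset.sum_eq_zero
        intro m hm
        simp only [Finset.mem_Ico] at hm
        simp [Nat.not_le_of_lt hm.2]
      rw [hz, zero_add]
      apply Finset.sum_congr rfl
      intro m hm
      simp only [Finset.mem_Ico] at hm
      simp [hm.1]
    rw [h2, Finset.sum_Ico_eq_sub _ hk, hsum_range, hsum_range, hrn n le_rfl]
    ring
  -- nonnegativity
  have ha_nonneg : ∀ i, 0 ≤ a i := fun i => sub_nonneg.2 (hr_le i)
  -- concavity of r, hence a antitone
  have hconcave : ∀ k : ℕ, r k + r (k + 2) ≤ r (k + 1) + r (k + 1) := by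
    intro k
    by_cases hk : k + 1 < n
    · have hk0 : k < n := by omega
      have hk1 : k + 1 < n := hk
      set σ : Equiv.Perm (Fin n) := Equiv.swap ⟨k, hk0⟩ ⟨k + 1, hk1⟩ with hσ
      have hkey : u k + u (k + 2) = u (k + 1) + (u (k + 1)) ∘ σ := by
        funext i
        simp only [Pi.add_apply, Function.comp_apply, hσ]
        by_cases h1 : i = ⟨k, hk0⟩
        · subst h1
          rw [Equiv.swap_apply_left]
          simp only [hu_def]
          split_ifs <;> first | (exfalso; omega) | norm_num
        · by_cases h2 : i = ⟨k + 1, hk1⟩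
          · subst h2
            rw [Equiv.swap_apply_right]
            simp only [hu_def]
            split_ifs <;> first | (exfalso; omega) | norm_num
          · rw [Equiv.swap_apply_of_ne_of_ne h1 h2]
            have e1 : (i : ℕ) ≠ k := fun hh => h1 (Fin.ext hh)
            have e2 : (i : ℕ) ≠ k + 1 := fun hh => h2 (Fin.ext hh)
            simp only [hu_def]
            split_ifs <;> first | (exfalso; omega) | norm_num
      have hcm : ρ (u k + u (k + 2)) = r k + r (k + 2) :=
        hcom _ _ (comono_of_monotone (hu_mono k) (hu_mono (k + 2)))
      have hperm : ρ ((u (k + 1)) ∘ σ) = ρ (u (k + 1)) := by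
        rw [hlaw ((u (k + 1)) ∘ σ), sortVec_comp_perm, ← hlaw]
      have hs := hsub (u (k + 1)) ((u (k + 1)) ∘ σ)
      rw [hperm] at hs
      calc r k + r (k + 2) = ρ (u k + u (k + 2)) := hcm.symm
        _ = ρ (u (k + 1) + (u (k + 1)) ∘ σ) := by rw [hkey]
        _ ≤ ρ (u (k + 1)) + ρ (u (k + 1)) := hs
        _ = r (k + 1) + r (k + 1) := rfl
    · -- k + 1 ≥ n
      have h2 : r (k + 2) = 0 := hrn _ (by omega)
      by_cases hk2 : n ≤ k
      · rw [hrn k hk2, hrn (k + 1) (by omega), h2]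
      · -- k = n - 1, so k + 1 = n
        rw [hrn (k + 1) (by omega), h2]
        have := hr_nonpos k
        linarith
  have hd_anti : Antitone (fun k : ℕ => r (k + 1) - r k) := by
    apply antitone_nat_of_succ_le
    intro k
    have := hconcave k
    show r (k + 1 + 1) - r (k + 1) ≤ r (k + 1) - r k
    linarith
  have ha_anti : ∀ i j : Fin n, i ≤ j → a j ≤ a i := by
    intro i j hij
    exact hd_anti (show (i : ℕ) ≤ (j : ℕ) from hij)
  -- main representation for nonnegative monotone vectors with zeros below n - k
  have main : ∀ k : ℕ, ∀ y : Fin n → ℝ, Monotone y → (∀ i, 0 ≤ y i) →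
      (∀ i : Fin n, (i : ℕ) < n - k → y i = 0) → ρ y = -∑ i, a i * y i := by
    intro k
    induction k with
    | zero =>
      intro y _ _ hz
      have hy0 : y = 0 := by
        funext i
        exact hz i (by have := i.isLt; omega)
      simp [hy0, hρ0]
    | succ k ih =>
      intro y hymono hynn hz
      by_cases hcase : n - (k + 1) = n - k
      · exact ih y hymono hynn (fun i hi => hz i (by omega))
      · have hmlt : n - (k + 1) < n := by omega
        set m : ℕ := n - (k + 1) with hm_def
        have hm1 : m + 1 = n - k := by omega
        set c : ℝ := y ⟨m, hmlt⟩ with hc_def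
        have hc : 0 ≤ c := hynn _
        set z : Fin n → ℝ := fun i => y i - c * u m i with hz_def
        have hcy : ∀ i : Fin n, m ≤ (i : ℕ) → c ≤ y i := by
          intro i hi
          exact hymono (show (⟨m, hmlt⟩ : Fin n) ≤ i from hi)
        have hzval : ∀ i : Fin n, z i = if m ≤ (i : ℕ) then y i - c else y i := by
          intro i
          simp only [hz_def, hu_def]
          split_ifs <;> ring
        have hzmono : Monotone z := by
          intro i j hij
          have hij' : (i : ℕ) ≤ (j : ℕ) := hij
          rw [hzval i, hzval j]
          by_cases hi : m ≤ (i : ℕ)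
          · rw [if_pos hi, if_pos (by omega)]
            have := hymono hij
            linarith
          · rw [if_neg hi]
            have hyi : y i = 0 := hz i (by omega)
            by_cases hj : m ≤ (j : ℕ)
            · rw [if_pos hj, hyi]
              have := hcy j hj
              linarith
            · rw [if_neg hj, hyi, hz j (by omega)]
        have hznn : ∀ i, 0 ≤ z i := by
          intro i
          rw [hzval i]
          by_cases hi : m ≤ (i : ℕ)
          · rw [if_pos hi]; have := hcy i hi; linarith
          · rw [if_neg hi]; exact hynn i
        have hzz : ∀ i : Fin n, (i : ℕ) < n - k → z i = 0 := by
          intro i hi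
          rw [hzval i]
          by_cases hi2 : (i : ℕ) < m
          · rw [if_neg (by omega)]; exact hz i (by omega)
          · have : (i : ℕ) = m := by omega
            rw [if_pos (by omega)]
            have : i = ⟨m, hmlt⟩ := Fin.ext this
            rw [this, ← hc_def]
            ring
        have hdecomp : y = (fun i => c * u m i) + z := by
          funext i
          simp only [Pi.add_apply, hz_def]
          ring
        have hcum : Monotone (fun i => c * u m i) := by
          intro i j hij
          exact mul_le_mul_of_nonneg_left (hu_mono m hij) hc
        have hρy : ρ y = c * r m + ρ z := by
          rw [hdecomp, hcom _ _ (comono_of_monotone hcum hzmono), hhom (u m) c hc]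
        have hρz := ih z hzmono hznn hzz
        have hsum : ∑ i, a i * y i = c * ∑ i, a i * u m i + ∑ i, a i * z i := by
          rw [Finset.mul_sum, ← Finset.sum_add_distrib]
          apply Finset.sum_congr rfl
          intro i _
          simp only [hz_def]
          ring
        rw [hρy, hρz, hsum, htail m (by omega)]
        ring
  -- representation for all monotone vectors
  have hrep_mono : ∀ x : Fin n → ℝ, Monotone x → ρ x = ∑ i, a i * (-(x i)) := by
    intro x hx
    set m0 : ℝ := x ⟨0, hn⟩ with hm0
    set y : Fin n → ℝ := fun i => x i - m0 with hy_def
    have hymono : Monotone y := by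
      intro i j hij
      simp only [hy_def]
      have := hx hij
      linarith
    have hynn : ∀ i, 0 ≤ y i := by
      intro i
      simp only [hy_def]
      have := hx (show (⟨0, hn⟩ : Fin n) ≤ i from Nat.zero_le _)
      linarith
    have hyrep := main n y hymono hynn (by intro i hi; omega)
    have hxy : x = fun i => y i + m0 := by
      funext i; simp [hy_def]
    have hρx : ρ x = ρ y - m0 := by
      rw [hxy]; exact hcash y m0
    rw [hρx, hyrep]
    have h3 : ∑ i, a i * (-(x i)) = ∑ i, (-(a i * y i) - m0 * a i) := by
      apply Finset.sum_congr rfl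
      intro i _
      simp only [hy_def]
      ring
    rw [h3, Finset.sum_sub_distrib, Finset.sum_neg_distrib, ← Finset.mul_sum, hsum_a]
    ring
  have hrep : ∀ x : Fin n → ℝ, ρ x = ∑ i, a i * (-(sortVec x i)) := by
    intro x
    rw [hlaw x]
    exact hrep_mono (sortVec x) (monotone_sortVec x)
  refine ⟨a, ⟨⟨ha_nonneg, hsum_a, ha_anti⟩, hrep⟩, ?_⟩
  -- uniqueness
  intro b ⟨_, hbrep⟩
  have hpart : ∀ m : ℕ, (∑ i : Fin n, if (i : ℕ) < m then b i else 0)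
      = ∑ i : Fin n, if (i : ℕ) < m then a i else 0 := by
    intro m
    set x : Fin n → ℝ := fun i => if m ≤ (i : ℕ) then 0 else -1 with hx_def
    have hxmono : Monotone x := by
      intro i j hij
      have hij' : (i : ℕ) ≤ (j : ℕ) := hij
      simp only [hx_def]
      split_ifs <;> first | (exfalso; omega) | norm_num
    have hs : sortVec x = x := sortVec_of_monotone hxmono
    have h1 := hbrep x
    have h2 := hrep x
    rw [hs] at h1 h2
    have hcoef : ∀ (c : Fin n → ℝ),
        ∑ i : Fin n, c i * (-(x i)) = ∑ i : Fin n, if (i : ℕ) < m then c i else 0 := by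
      intro c
      apply Finset.sum_congr rfl
      intro i _
      simp only [hx_def]
      split_ifs with h h' h' <;> first | (exfalso; omega) | ring
    rw [hcoef b] at h1
    rw [hcoef a] at h2
    rw [← h1, ← h2]
  funext i
  have h1 := hpart ((i : ℕ) + 1)
  have h2 := hpart (i : ℕ)
  have hb := partial_sum_extract b i
  have ha := partial_sum_extract a i
  rw [h1, h2] at hb
  rw [hb] at ha
  linarith [ha]
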